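/- arXiv:2512.09856 — 4 statements merged into one kernel-verified Lean document; each statement's English description precedes it below -/
import Mathlib

section
/- Let {G^A_i}_{i=0}^{d^2-1} and {G^B_j}_{j=0}^{d^2-1} be orthogonal operator bases on ℂ^d (Tr(G† G') = d·δ, G_0 = I, G_i traceless and Hermitian for i ≥ 1), let C = [c_{ij}] be a real (d²−1)×(d²−1) matrix, and set S = ∑_{i,j=1}^{d^2-1} c_{ij} G^A_i ⊗ G^B_j (Kronecker product). Then for all unit vectors ψ_A, ψ_B ∈ ℂ^d, the product state ψ_A ⊗ ψ_B satisfies |⟨ψ_A ⊗ ψ_B, S (ψ_A ⊗ ψ_B)⟩| ≤ (d−1)·‖C‖, where ‖C‖ denotes the operator norm (largest singular value) of C. -/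
open Matrix
open Kronecker
open scoped BigOperators ComplexOrder

lemma kron_dot {d : ℕ} (A B : Matrix (Fin d) (Fin d) ℂ) (ψA ψB : Fin d → ℂ) :
    (star (fun p : Fin d × Fin d => ψA p.1 * ψB p.2)) ⬝ᵥ
      (A ⊗ₖ B).mulVec (fun p : Fin d × Fin d => ψA p.1 * ψB p.2)
    = ((star ψA) ⬝ᵥ A.mulVec ψA) * ((star ψB) ⬝ᵥ B.mulVec ψB) := by
  simp only [dotProduct, mulVec, Pi.star_apply, Matrix.kroneckerMap_apply,
    Fintype.sum_prod_type]
  rw [Finset.sum_mul_sum]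
  refine Finset.sum_congr rfl fun i _ => Finset.sum_congr rfl fun j _ => ?_
  conv_rhs => rw [mul_mul_mul_comm, Finset.sum_mul_sum]
  simp only [Finset.mul_sum]
  refine Finset.sum_congr rfl fun k _ => Finset.sum_congr rfl fun l _ => ?_
  simp only [star_mul']
  ring

lemma bessel_bound {d n : ℕ} (hd : 0 < d)
    (G : Fin (n + 1) → Matrix (Fin d) (Fin d) ℂ)
    (hG : ∀ k l, ((G k)ᴴ * G l).trace = if k = l then (d : ℂ) else 0)
    (hG0 : G 0 = 1)
    (hherm : ∀ i : Fin n, (G i.succ).IsHermitian)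
    (ψ : Fin d → ℂ) (hψ : ∑ i, ‖ψ i‖ ^ 2 = 1) :
    ∃ a : Fin n → ℝ, (∀ i, star ψ ⬝ᵥ (G i.succ).mulVec ψ = (a i : ℂ)) ∧
      ∑ i, a i ^ 2 ≤ (d : ℝ) - 1 := by
  classical
  have hdR : (0:ℝ) < d := by exact_mod_cast hd
  have hdC : (d : ℂ) ≠ 0 := Nat.cast_ne_zero.mpr hd.ne'
  have hψC : ∑ i, starRingEnd ℂ (ψ i) * ψ i = 1 := by
    have h : ∀ i, starRingEnd ℂ (ψ i) * ψ i = ((‖ψ i‖ ^ 2 : ℝ) : ℂ) := by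
      intro i
      rw [mul_comm, Complex.mul_conj]
      norm_cast
      simp [Complex.normSq_eq_norm_sq]
    rw [Finset.sum_congr rfl fun i _ => h i, ← Complex.ofReal_sum, hψ]
    norm_num
  set c : ℂ := ((Real.sqrt d : ℝ) : ℂ)⁻¹ with hc
  have hcconj : starRingEnd ℂ c = c := by
    simp [hc, ← Complex.ofReal_inv]
  have hcc : c * c = (d : ℂ)⁻¹ := by
    rw [hc, ← Complex.ofReal_inv, ← Complex.ofReal_mul, ← mul_inv,
      Real.mul_self_sqrt hdR.le]
    push_cast
    ring
  set e : Fin (n + 1) → EuclideanSpace ℂ (Fin d × Fin d) :=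
    fun k => WithLp.toLp 2 (fun p : Fin d × Fin d => c * G k p.1 p.2) with he
  have htr : ∀ k l, ∑ j, ∑ i, starRingEnd ℂ (G k i j) * G l i j
      = if k = l then (d : ℂ) else 0 := by
    intro k l
    have := hG k l
    simpa [Matrix.trace, Matrix.mul_apply, Matrix.conjTranspose_apply,
      Matrix.diag] using this
  have hinner : ∀ k l, (inner ℂ (e k) (e l) : ℂ) = if k = l then 1 else 0 := by
    intro k l
    have h1 : (inner ℂ (e k) (e l) : ℂ)
        = (c * c) * ∑ j, ∑ i, starRingEnd ℂ (G k i j) * G l i j := by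
      rw [PiLp.inner_apply]
      simp only [RCLike.inner_apply, he, PiLp.toLp_apply, _root_.map_mul, hcconj, Finset.mul_sum,
        Fintype.sum_prod_type]
      rw [Finset.sum_comm]
      exact Finset.sum_congr rfl fun j _ => Finset.sum_congr rfl fun i _ => by ring
    rw [h1, htr, hcc]
    split_ifs
    · field_simp
    · ring
  have horth : Orthonormal ℂ e := orthonormal_iff_ite.mpr hinner
  set x : EuclideanSpace ℂ (Fin d × Fin d) :=
    WithLp.toLp 2 (fun p : Fin d × Fin d => ψ p.1 * starRingEnd ℂ (ψ p.2)) with hx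
  have hxnorm : ‖x‖ ^ 2 = 1 := by
    rw [EuclideanSpace.norm_eq, Real.sq_sqrt (by positivity)]
    have : ∑ p : Fin d × Fin d, ‖x p‖ ^ 2 = (∑ i, ‖ψ i‖ ^ 2) * (∑ j, ‖ψ j‖ ^ 2) := by
      rw [Finset.sum_mul_sum, Fintype.sum_prod_type]
      refine Finset.sum_congr rfl fun i _ => Finset.sum_congr rfl fun j _ => ?_
      simp [hx, norm_mul, mul_pow]
    rw [this, hψ]
    norm_num
  have hψC' : ∑ i, ψ i * starRingEnd ℂ (ψ i) = 1 := by
    rw [← hψC]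
    exact Finset.sum_congr rfl fun i _ => mul_comm _ _
  have h0 : (inner ℂ (e 0) x : ℂ) = c := by
    rw [PiLp.inner_apply]
    simp only [RCLike.inner_apply, he, hx, PiLp.toLp_apply, hG0, Matrix.one_apply, _root_.map_mul, hcconj,
      apply_ite (starRingEnd ℂ), _root_.map_one, map_zero, mul_ite, mul_zero, mul_one,
      ite_mul, zero_mul, Fintype.sum_prod_type, Finset.sum_ite_eq, Finset.mem_univ,
      if_true]
    rw [← Finset.sum_mul, hψC', one_mul]
  have hsucc : ∀ i : Fin n,
      (inner ℂ (e i.succ) x : ℂ) = c * (star ψ ⬝ᵥ (G i.succ).mulVec ψ) := by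
    intro i
    rw [PiLp.inner_apply]
    simp only [RCLike.inner_apply, he, hx, PiLp.toLp_apply, _root_.map_mul, hcconj, dotProduct,
      mulVec, Pi.star_apply, Finset.mul_sum, Fintype.sum_prod_type]
    rw [Finset.sum_comm]
    refine Finset.sum_congr rfl fun p2 _ => Finset.sum_congr rfl fun p1 _ => ?_
    rw [show starRingEnd ℂ (G i.succ p1 p2) = G i.succ p2 p1 from (hherm i).apply p2 p1]
    simp only [RCLike.star_def]
    ring
  have hreal : ∀ i : Fin n, starRingEnd ℂ (star ψ ⬝ᵥ (G i.succ).mulVec ψ)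
      = star ψ ⬝ᵥ (G i.succ).mulVec ψ := by
    intro i
    simp only [dotProduct, mulVec, Pi.star_apply, map_sum, _root_.map_mul,
      RCLike.star_def, Complex.conj_conj, Finset.mul_sum]
    rw [Finset.sum_comm]
    refine Finset.sum_congr rfl fun p2 _ => Finset.sum_congr rfl fun p1 _ => ?_
    rw [show starRingEnd ℂ (G i.succ p1 p2) = G i.succ p2 p1 from (hherm i).apply p2 p1]
    ring
  refine ⟨fun i => (star ψ ⬝ᵥ (G i.succ).mulVec ψ).re, fun i => ?_, ?_⟩
  · exact (Complex.conj_eq_iff_re.mp (hreal i)).symm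
  · have hb := horth.sum_inner_products_le (s := Finset.univ) x
    rw [Fin.sum_univ_succ, hxnorm, h0] at hb
    have hbs : ∀ i : Fin n, ‖(inner ℂ (e i.succ) x : ℂ)‖ ^ 2
        = (d : ℝ)⁻¹ * ((star ψ ⬝ᵥ (G i.succ).mulVec ψ).re) ^ 2 := by
      intro i
      rw [hsucc i, (Complex.conj_eq_iff_re.mp (hreal i)).symm]
      rw [norm_mul, mul_pow, hc]
      simp only [norm_inv, Complex.norm_real, Real.norm_eq_abs,
        abs_of_nonneg (Real.sqrt_nonneg _), Complex.sq_norm]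
      rw [inv_pow, Real.sq_sqrt hdR.le]
      simp [sq_abs]
    simp only [hbs] at hb
    rw [← Finset.mul_sum] at hb
    have hcn : ‖c‖ ^ 2 = (d : ℝ)⁻¹ := by
      rw [hc]
      simp only [norm_inv, Complex.norm_real, Real.norm_eq_abs,
        abs_of_nonneg (Real.sqrt_nonneg _)]
      rw [inv_pow, Real.sq_sqrt hdR.le]
    rw [hcn] at hb
    have h2 : (d : ℝ)⁻¹ * ∑ i : Fin n, ((star ψ ⬝ᵥ (G i.succ).mulVec ψ).re) ^ 2
        ≤ 1 - (d : ℝ)⁻¹ := by linarith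
    have h3 := mul_le_mul_of_nonneg_left h2 hdR.le
    rw [← mul_assoc, mul_inv_cancel₀ hdR.ne', one_mul] at h3
    calc ∑ i : Fin n, ((star ψ ⬝ᵥ (G i.succ).mulVec ψ).re) ^ 2
        ≤ (d : ℝ) * (1 - (d : ℝ)⁻¹) := h3
      _ = (d : ℝ) - 1 := by field_simp

/-- The operator norm (largest singular value) of a real square matrix,
realized as the norm of the induced continuous linear map on Euclidean space. -/
noncomputable def opNorm {n : ℕ} (C : Matrix (Fin n) (Fin n) ℝ) : ℝ :=
  ‖(Matrix.toEuclideanCLM (𝕜 := ℝ) C :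
      EuclideanSpace ℝ (Fin n) →L[ℝ] EuclideanSpace ℝ (Fin n))‖

/-- For orthogonal Hermitian operator bases `{G^A i}`, `{G^B j}` on `ℂ^d`
(`Tr(G† G') = d δ`, `G 0 = I`, `G i` traceless Hermitian for `i ≥ 1`), a real
`(d²−1)×(d²−1)` matrix `C`, and `S = ∑_{i,j≥1} c_{ij} G^A_i ⊗ G^B_j`, every product
state `ψ_A ⊗ ψ_B` of unit vectors satisfies `|⟨ψ_A⊗ψ_B, S(ψ_A⊗ψ_B)⟩| ≤ (d−1)‖C‖`. -/
theorem stmt2 (d n : ℕ) (hn : n + 1 = d ^ 2)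
    (GA GB : Fin (n + 1) → Matrix (Fin d) (Fin d) ℂ)
    (hGA : ∀ k l, ((GA k)ᴴ * GA l).trace = if k = l then (d : ℂ) else 0)
    (hGB : ∀ k l, ((GB k)ᴴ * GB l).trace = if k = l then (d : ℂ) else 0)
    (hGA0 : GA 0 = 1) (hGB0 : GB 0 = 1)
    (hGAtr : ∀ i : Fin n, (GA i.succ).trace = 0)
    (hGBtr : ∀ i : Fin n, (GB i.succ).trace = 0)
    (hGAherm : ∀ i : Fin n, (GA i.succ).IsHermitian)
    (hGBherm : ∀ i : Fin n, (GB i.succ).IsHermitian)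
    (C : Matrix (Fin n) (Fin n) ℝ)
    (S : Matrix (Fin d × Fin d) (Fin d × Fin d) ℂ)
    (hS : S = ∑ i : Fin n, ∑ j : Fin n, (C i j : ℂ) • (GA i.succ ⊗ₖ GB j.succ))
    (ψA ψB : Fin d → ℂ)
    (hψA : ∑ i, ‖ψA i‖ ^ 2 = 1) (hψB : ∑ i, ‖ψB i‖ ^ 2 = 1) :
    ‖(star (fun p : Fin d × Fin d => ψA p.1 * ψB p.2)) ⬝ᵥ
        S.mulVec (fun p : Fin d × Fin d => ψA p.1 * ψB p.2)‖
      ≤ ((d : ℝ) - 1) * opNorm C := by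
  classical
  have hd : 0 < d := by
    rcases Nat.eq_zero_or_pos d with h | h
    · rw [h] at hn; norm_num at hn
    · exact h
  have hd1 : (1 : ℝ) ≤ (d : ℝ) := by exact_mod_cast hd
  obtain ⟨a, ha, hasum⟩ := bessel_bound hd GA hGA hGA0 hGAherm ψA hψA
  obtain ⟨b, hb, hbsum⟩ := bessel_bound hd GB hGB hGB0 hGBherm ψB hψB
  set ψ : Fin d × Fin d → ℂ := fun p => ψA p.1 * ψB p.2 with hψ
  -- linearity
  set L : Matrix (Fin d × Fin d) (Fin d × Fin d) ℂ →ₗ[ℂ] ℂ :=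
    { toFun := fun A => star ψ ⬝ᵥ A.mulVec ψ
      map_add' := fun A B => by rw [Matrix.add_mulVec, dotProduct_add]
      map_smul' := fun c A => by
        rw [Matrix.smul_mulVec, dotProduct_smul]; rfl } with hL
  have hQ : star ψ ⬝ᵥ S.mulVec ψ
      = ((∑ i : Fin n, ∑ j : Fin n, C i j * (a i * b j) : ℝ) : ℂ) := by
    have h1 : star ψ ⬝ᵥ S.mulVec ψ = L S := rfl
    rw [h1, hS, map_sum]
    push_cast
    refine Finset.sum_congr rfl fun i _ => ?_
    rw [map_sum]
    refine Finset.sum_congr rfl fun j _ => ?_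
    rw [LinearMap.map_smul, smul_eq_mul]
    have h2 : L (GA i.succ ⊗ₖ GB j.succ) = ((a i : ℂ)) * ((b j : ℂ)) := by
      show star ψ ⬝ᵥ (GA i.succ ⊗ₖ GB j.succ).mulVec ψ = _
      rw [hψ, kron_dot, ha i, hb j]
    rw [h2]
  rw [show (star fun p : Fin d × Fin d => ψA p.1 * ψB p.2) ⬝ᵥ
      S.mulVec (fun p : Fin d × Fin d => ψA p.1 * ψB p.2) = star ψ ⬝ᵥ S.mulVec ψ from rfl,
    hQ, Complex.norm_real, Real.norm_eq_abs]
  -- now real inner product bound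
  set av : EuclideanSpace ℝ (Fin n) := (WithLp.equiv 2 _).symm a with hav
  set bv : EuclideanSpace ℝ (Fin n) := (WithLp.equiv 2 _).symm b with hbv
  set T := (Matrix.toEuclideanCLM (𝕜 := ℝ) C :
      EuclideanSpace ℝ (Fin n) →L[ℝ] EuclideanSpace ℝ (Fin n)) with hT
  have hie : (∑ i : Fin n, ∑ j : Fin n, C i j * (a i * b j)) = inner ℝ av (T bv) := by
    rw [hT]
    show _ = (inner ℝ av (Matrix.toEuclideanCLM (𝕜 := ℝ) C ((WithLp.equiv 2 _).symm b)) : ℝ)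
    rw [WithLp.equiv_symm_apply, Matrix.toEuclideanCLM_toLp, PiLp.inner_apply]
    simp only [Matrix.toLin'_apply]
    simp only [RCLike.inner_apply, starRingEnd_apply, star_trivial,
      WithLp.equiv_symm_apply, PiLp.toLp_apply, Matrix.mulVec, dotProduct, hav, Finset.mul_sum, Finset.sum_mul]
    exact Finset.sum_congr rfl fun i _ => Finset.sum_congr rfl fun j _ => by ring
  rw [hie]
  have hnav : ‖av‖ ≤ Real.sqrt ((d : ℝ) - 1) := by
    rw [EuclideanSpace.norm_eq]
    apply Real.sqrt_le_sqrt
    calc ∑ i, ‖av i‖ ^ 2 = ∑ i, a i ^ 2 := by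
          refine Finset.sum_congr rfl fun i _ => ?_
          rw [Real.norm_eq_abs, sq_abs]; rfl
      _ ≤ (d : ℝ) - 1 := hasum
  have hnbv : ‖bv‖ ≤ Real.sqrt ((d : ℝ) - 1) := by
    rw [EuclideanSpace.norm_eq]
    apply Real.sqrt_le_sqrt
    calc ∑ i, ‖bv i‖ ^ 2 = ∑ i, b i ^ 2 := by
          refine Finset.sum_congr rfl fun i _ => ?_
          rw [Real.norm_eq_abs, sq_abs]; rfl
      _ ≤ (d : ℝ) - 1 := hbsum
  have h1 : |(inner ℝ av (T bv) : ℝ)| ≤ ‖av‖ * ‖T bv‖ := abs_real_inner_le_norm _ _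
  have h2 : ‖T bv‖ ≤ ‖T‖ * ‖bv‖ := T.le_opNorm bv
  have hs : Real.sqrt ((d : ℝ) - 1) * Real.sqrt ((d : ℝ) - 1) = (d : ℝ) - 1 :=
    Real.mul_self_sqrt (by linarith)
  have hopn : opNorm C = ‖T‖ := rfl
  rw [hopn]
  calc |(inner ℝ av (T bv) : ℝ)| ≤ ‖av‖ * ‖T bv‖ := h1
    _ ≤ ‖av‖ * (‖T‖ * ‖bv‖) := by
        apply mul_le_mul_of_nonneg_left h2 (norm_nonneg _)
    _ ≤ Real.sqrt ((d : ℝ) - 1) * (‖T‖ * Real.sqrt ((d : ℝ) - 1)) := by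
        apply mul_le_mul hnav (mul_le_mul_of_nonneg_left hnbv (norm_nonneg _))
          (by positivity) (Real.sqrt_nonneg _)
    _ = ((d : ℝ) - 1) * ‖T‖ := by rw [mul_comm ‖T‖, ← mul_assoc, hs]
end

section
/- Let {G^A_i}_{i=0}^{d^2-1} and {G^B_j}_{j=0}^{d^2-1} be orthogonal operator bases on ℂ^d (Tr(G† G') = d·δ, G_0 = I, G_i traceless and Hermitian for i ≥ 1), let C = [c_{ij}] be a real (d²−1)×(d²−1) matrix, and set S = ∑_{i,j=1}^{d^2-1} c_{ij} G^A_i ⊗ G^B_j. Then for every separable state σ on ℂ^d ⊗ ℂ^d, i.e., every finite convex combination σ = ∑_k p_k ρ^A_k ⊗ ρ^B_k of Kronecker products of density matrices with p_k ≥ 0 and ∑_k p_k = 1, it holds that −(d−1)·‖C‖ ≤ Tr(S σ) ≤ (d−1)·‖C‖, where ‖C‖ is the operator norm of C. -/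
open Matrix
open Kronecker
open scoped BigOperators ComplexOrder

/-- A density matrix: Hermitian, positive semidefinite, trace one. -/
def IsDensityMatrix {n : Type*} [Fintype n] (ρ : Matrix n n ℂ) : Prop :=
  ρ.IsHermitian ∧ ρ.PosSemidef ∧ ρ.trace = 1

/-- A separable state on `ℂ^d ⊗ ℂ^d`: a finite convex combination of Kronecker
products of density matrices. -/
def IsSeparableState {d : ℕ} (σ : Matrix (Fin d × Fin d) (Fin d × Fin d) ℂ) : Prop :=
  ∃ (m : ℕ) (p : Fin m → ℝ) (ρA ρB : Fin m → Matrix (Fin d) (Fin d) ℂ),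
    (∀ k, 0 ≤ p k) ∧ (∑ k, p k = 1) ∧
    (∀ k, IsDensityMatrix (ρA k)) ∧ (∀ k, IsDensityMatrix (ρB k)) ∧
    σ = ∑ k, (p k : ℂ) • (ρA k ⊗ₖ ρB k)


lemma trace_real_of_herm {d : ℕ} {G ρ : Matrix (Fin d) (Fin d) ℂ}
    (hG : G.IsHermitian) (hρ : ρ.IsHermitian) :
    (G * ρ).trace = (((G * ρ).trace.re : ℝ) : ℂ) := by
  have h : star ((G * ρ).trace) = (G * ρ).trace := by
    rw [← Matrix.trace_conjTranspose, Matrix.conjTranspose_mul, hG.eq, hρ.eq,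
      Matrix.trace_mul_comm]
  exact (Complex.conj_eq_iff_re.mp h).symm

lemma trace_sq_re_nonneg {d : ℕ} (M : Matrix (Fin d) (Fin d) ℂ) :
    0 ≤ (Mᴴ * M).trace.re := by
  have h : (Mᴴ * M).trace = ((∑ j, ∑ i, Complex.normSq (M i j) : ℝ) : ℂ) := by
    push_cast
    simp [Matrix.trace, Matrix.diag, Matrix.mul_apply, Matrix.conjTranspose_apply,
      Complex.normSq_eq_conj_mul_self]
  rw [h, Complex.ofReal_re]
  exact Finset.sum_nonneg fun j _ => Finset.sum_nonneg fun i _ => Complex.normSq_nonneg _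

lemma bessel {d m : ℕ} (hd : 0 < d) (G : Fin m → Matrix (Fin d) (Fin d) ℂ)
    (hG : ∀ k l, ((G k)ᴴ * G l).trace = if k = l then (d : ℂ) else 0)
    (ρ : Matrix (Fin d) (Fin d) ℂ) :
    ∑ k, Complex.normSq ((G k)ᴴ * ρ).trace ≤ (d : ℝ) * (ρᴴ * ρ).trace.re := by
  set x : Fin m → ℂ := fun k => ((G k)ᴴ * ρ).trace with hx
  set T : Matrix (Fin d) (Fin d) ℂ := ∑ k, x k • G k with hT
  set M : Matrix (Fin d) (Fin d) ℂ := ρ - ((d : ℂ))⁻¹ • T with hM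
  have hstar : ∀ k, (ρᴴ * G k).trace = star (x k) := by
    intro k
    rw [hx]
    rw [← Matrix.trace_conjTranspose, Matrix.conjTranspose_mul, Matrix.conjTranspose_conjTranspose]
  have hTρ : (Tᴴ * ρ).trace = ((∑ k, Complex.normSq (x k) : ℝ) : ℂ) := by
    rw [hT, Matrix.conjTranspose_sum, Finset.sum_mul, Matrix.trace_sum]
    push_cast
    simp only [Matrix.conjTranspose_smul, Matrix.smul_mul, Matrix.trace_smul, star_smul]
    congr 1; ext k
    simp only [smul_eq_mul, ← hx, Complex.normSq_eq_conj_mul_self, Complex.star_def]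
    rfl
  have hρT : (ρᴴ * T).trace = ((∑ k, Complex.normSq (x k) : ℝ) : ℂ) := by
    rw [hT, Finset.mul_sum, Matrix.trace_sum]
    push_cast
    simp only [Matrix.mul_smul, Matrix.trace_smul]
    congr 1; ext k
    rw [smul_eq_mul, hstar k, Complex.star_def, Complex.normSq_eq_conj_mul_self]
    ring
  have hTT : (Tᴴ * T).trace = (d : ℂ) * ((∑ k, Complex.normSq (x k) : ℝ) : ℂ) := by
    rw [hT, Matrix.conjTranspose_sum, Finset.sum_mul, Matrix.trace_sum]
    have : ∀ k : Fin m, ((x k • G k)ᴴ * ∑ l, x l • G l).trace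
        = (d : ℂ) * Complex.normSq (x k) := by
      intro k
      rw [Finset.mul_sum, Matrix.trace_sum]
      rw [Finset.sum_eq_single k]
      · simp only [Matrix.conjTranspose_smul, Matrix.smul_mul, Matrix.mul_smul,
          Matrix.trace_smul, smul_eq_mul, star_smul]
        rw [hG k k, Complex.star_def, Complex.normSq_eq_conj_mul_self]
        norm_num
        ring
      · intro l _ hlk
        simp only [Matrix.conjTranspose_smul, Matrix.smul_mul, Matrix.mul_smul,
          Matrix.trace_smul, smul_eq_mul, star_smul]
        rw [hG k l, if_neg (fun h => hlk h.symm)]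
        simp
      · intro h; exact absurd (Finset.mem_univ k) h
    rw [Finset.sum_congr rfl (fun k _ => this k), ← Finset.mul_sum]
    push_cast
    ring
  have hMtr : (Mᴴ * M).trace
      = (ρᴴ * ρ).trace - ((d : ℂ))⁻¹ * ((∑ k, Complex.normSq (x k) : ℝ) : ℂ) := by
    have hMH : Mᴴ = ρᴴ - ((d : ℂ))⁻¹ • Tᴴ := by
      rw [hM, Matrix.conjTranspose_sub, Matrix.conjTranspose_smul]
      norm_num
    rw [hM, hMH, Matrix.sub_mul, Matrix.mul_sub, Matrix.mul_sub]
    simp only [Matrix.trace_sub, Matrix.smul_mul, Matrix.mul_smul, Matrix.trace_smul,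
      smul_smul, smul_eq_mul]
    rw [hTρ, hρT, hTT]
    have hd0 : (d : ℂ) ≠ 0 := Nat.cast_ne_zero.mpr hd.ne'
    field_simp
    ring
  have h0 := trace_sq_re_nonneg M
  rw [hMtr] at h0
  have : (((d : ℂ))⁻¹ * ((∑ k, Complex.normSq (x k) : ℝ) : ℂ)).re
      = (d : ℝ)⁻¹ * ∑ k, Complex.normSq (x k) := by
    push_cast
    simp
  rw [Complex.sub_re, this] at h0
  have hd0 : (0:ℝ) < d := by exact_mod_cast hd
  have hdd : (d:ℝ) * (d:ℝ)⁻¹ = 1 := mul_inv_cancel₀ hd0.ne'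
  show ∑ k, Complex.normSq (x k) ≤ (d : ℝ) * (ρᴴ * ρ).trace.re
  have h2 : 0 ≤ (d:ℝ) * ((ρᴴ * ρ).trace.re - (d:ℝ)⁻¹ * ∑ k, Complex.normSq (x k)) :=
    mul_nonneg hd0.le h0
  rw [mul_sub, ← mul_assoc, hdd, one_mul] at h2
  linarith


lemma purity {d : ℕ} {ρ : Matrix (Fin d) (Fin d) ℂ} (hρ : ρ.PosSemidef) (htr : ρ.trace = 1) :
    (ρᴴ * ρ).trace.re ≤ 1 := by
  have hH : ρ.IsHermitian := hρ.1
  set U : Matrix (Fin d) (Fin d) ℂ := (hH.eigenvectorUnitary : Matrix (Fin d) (Fin d) ℂ) with hUdef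
  set D : Matrix (Fin d) (Fin d) ℂ := diagonal (RCLike.ofReal ∘ hH.eigenvalues) with hDdef
  have hUU : star U * U = 1 := Matrix.mem_unitaryGroup_iff'.mp (hH.eigenvectorUnitary).2
  have hspec : ρ = U * D * star U := hH.spectral_theorem
  have traceUMU : ∀ M : Matrix (Fin d) (Fin d) ℂ, (U * M * star U).trace = M.trace := by
    intro M
    rw [Matrix.trace_mul_cycle, Matrix.mul_assoc, ← Matrix.mul_assoc, hUU, Matrix.one_mul]
  have htrsum : ∑ i, hρ.1.eigenvalues i = 1 := by
    have h1 : ρ.trace = ∑ i, ((hH.eigenvalues i : ℝ) : ℂ) := by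
      conv_lhs => rw [hspec]
      rw [traceUMU, hDdef, Matrix.trace_diagonal]
      rfl
    rw [htr] at h1
    have := congrArg Complex.re h1
    simpa using this.symm
  have hsq : (ρᴴ * ρ).trace.re = ∑ i, (hρ.1.eigenvalues i) ^ 2 := by
    rw [hH.eq]
    conv_lhs => rw [hspec]
    have h2 : U * D * star U * (U * D * star U) = U * (D * D) * star U := by
      calc U * D * star U * (U * D * star U) = U * D * (star U * U) * D * star U := by
            simp only [Matrix.mul_assoc]
        _ = U * (D * D) * star U := by
            rw [hUU]; simp only [Matrix.mul_assoc, Matrix.mul_one, Matrix.one_mul]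
    rw [h2, traceUMU, hDdef, Matrix.diagonal_mul_diagonal, Matrix.trace_diagonal]
    push_cast
    simp [pow_two]
  rw [hsq]
  calc ∑ i, (hρ.1.eigenvalues i) ^ 2 ≤ (∑ i, hρ.1.eigenvalues i) ^ 2 :=
        Finset.sum_sq_le_sq_sum_of_nonneg fun i _ => hρ.eigenvalues_nonneg i
    _ = 1 := by rw [htrsum]; norm_num

lemma coeff_bound {d n : ℕ} (hd : 0 < d)
    (G : Fin (n+1) → Matrix (Fin d) (Fin d) ℂ)
    (hG : ∀ k l, ((G k)ᴴ * G l).trace = if k = l then (d : ℂ) else 0)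
    (hG0 : G 0 = 1)
    (hGh : ∀ i : Fin n, (G i.succ).IsHermitian)
    {ρ : Matrix (Fin d) (Fin d) ℂ} (hρ : IsDensityMatrix ρ) :
    ∑ i : Fin n, ((G i.succ * ρ).trace.re)^2 ≤ (d : ℝ) - 1 := by
  obtain ⟨hherm, hpsd, htr⟩ := hρ
  have hb := bessel hd G hG ρ
  have hp := purity hpsd htr
  have hd0 : (0:ℝ) ≤ d := by positivity
  have hb' : ∑ k, Complex.normSq ((G k)ᴴ * ρ).trace ≤ (d : ℝ) := by
    calc ∑ k, Complex.normSq ((G k)ᴴ * ρ).trace ≤ (d:ℝ) * (ρᴴ * ρ).trace.re := hb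
      _ ≤ (d:ℝ) * 1 := by nlinarith
      _ = (d:ℝ) := mul_one _
  rw [Fin.sum_univ_succ] at hb'
  have h0 : Complex.normSq ((G 0)ᴴ * ρ).trace = 1 := by
    rw [hG0]
    simp [htr]
  have hterm : ∀ i : Fin n,
      Complex.normSq ((G i.succ)ᴴ * ρ).trace = ((G i.succ * ρ).trace.re)^2 := by
    intro i
    rw [(hGh i).eq]
    conv_lhs => rw [trace_real_of_herm (hGh i) hherm]
    rw [Complex.normSq_ofReal, ← pow_two]
  rw [h0, Finset.sum_congr rfl (fun i _ => hterm i)] at hb'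
  linarith

lemma term_bound {d n : ℕ} (hd : 0 < d)
    (GA GB : Fin (n + 1) → Matrix (Fin d) (Fin d) ℂ)
    (hGA : ∀ k l, ((GA k)ᴴ * GA l).trace = if k = l then (d : ℂ) else 0)
    (hGB : ∀ k l, ((GB k)ᴴ * GB l).trace = if k = l then (d : ℂ) else 0)
    (hGA0 : GA 0 = 1) (hGB0 : GB 0 = 1)
    (hGAherm : ∀ i : Fin n, (GA i.succ).IsHermitian)
    (hGBherm : ∀ i : Fin n, (GB i.succ).IsHermitian)
    (C : Matrix (Fin n) (Fin n) ℝ)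
    (ρA ρB : Matrix (Fin d) (Fin d) ℂ)
    (hρA : IsDensityMatrix ρA) (hρB : IsDensityMatrix ρB) :
    ∃ r : ℝ, ((∑ i : Fin n, ∑ j : Fin n, (C i j : ℂ) • (GA i.succ ⊗ₖ GB j.succ))
        * (ρA ⊗ₖ ρB)).trace = (r : ℂ) ∧ |r| ≤ ((d:ℝ) - 1) * opNorm C := by
  set a : EuclideanSpace ℝ (Fin n) :=
    (WithLp.equiv 2 (Fin n → ℝ)).symm (fun i => (GA i.succ * ρA).trace.re) with ha
  set b : EuclideanSpace ℝ (Fin n) :=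
    (WithLp.equiv 2 (Fin n → ℝ)).symm (fun j => (GB j.succ * ρB).trace.re) with hb
  refine ⟨inner ℝ a (Matrix.toEuclideanCLM (𝕜 := ℝ) C b), ?_, ?_⟩
  · -- the trace equals the inner product
    have htr : ((∑ i : Fin n, ∑ j : Fin n, (C i j : ℂ) • (GA i.succ ⊗ₖ GB j.succ))
        * (ρA ⊗ₖ ρB)).trace
        = ∑ i, ∑ j, (C i j : ℂ) * (GA i.succ * ρA).trace * (GB j.succ * ρB).trace := by
      rw [Finset.sum_mul, Matrix.trace_sum]
      refine Finset.sum_congr rfl fun i _ => ?_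
      rw [Finset.sum_mul, Matrix.trace_sum]
      refine Finset.sum_congr rfl fun j _ => ?_
      rw [Matrix.smul_mul, Matrix.trace_smul, ← Matrix.mul_kronecker_mul,
        Matrix.trace_kronecker, smul_eq_mul]
      ring
    have hinner : (inner ℝ a (Matrix.toEuclideanCLM (𝕜 := ℝ) C b) : ℝ)
        = ∑ i, ∑ j, (GA i.succ * ρA).trace.re * (C i j * (GB j.succ * ρB).trace.re) := by
      rw [ha, hb, WithLp.equiv_symm_apply, Matrix.toEuclideanCLM_toLp]
      simp [PiLp.inner_apply, RCLike.inner_apply, Matrix.mulVec, dotProduct,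
        Finset.mul_sum]
      simp only [Finset.sum_mul]
      exact Finset.sum_congr rfl fun i _ => Finset.sum_congr rfl fun j _ => by ring
    rw [htr, hinner]
    push_cast
    refine Finset.sum_congr rfl fun i _ => Finset.sum_congr rfl fun j _ => ?_
    conv_lhs => rw [trace_real_of_herm (hGAherm i) hρA.1,
      trace_real_of_herm (hGBherm j) hρB.1]
    ring
  · -- the bound
    have hd1 : (1:ℝ) ≤ d := by exact_mod_cast hd
    have hna : ‖a‖ ≤ Real.sqrt ((d:ℝ) - 1) := by
      rw [EuclideanSpace.norm_eq]
      apply Real.sqrt_le_sqrt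
      simpa [Real.norm_eq_abs, sq_abs, ha] using
        coeff_bound hd GA hGA hGA0 hGAherm hρA
    have hnb : ‖b‖ ≤ Real.sqrt ((d:ℝ) - 1) := by
      rw [EuclideanSpace.norm_eq]
      apply Real.sqrt_le_sqrt
      simpa [Real.norm_eq_abs, sq_abs, hb] using
        coeff_bound hd GB hGB hGB0 hGBherm hρB
    have h1 : |(inner ℝ a (Matrix.toEuclideanCLM (𝕜 := ℝ) C b) : ℝ)|
        ≤ ‖a‖ * (opNorm C * ‖b‖) :=
      le_trans (abs_real_inner_le_norm _ _)
        (mul_le_mul_of_nonneg_left ((Matrix.toEuclideanCLM (𝕜 := ℝ) C).le_opNorm b)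
          (norm_nonneg a))
    have hs : Real.sqrt ((d:ℝ) - 1) * Real.sqrt ((d:ℝ) - 1) = (d:ℝ) - 1 :=
      Real.mul_self_sqrt (by linarith)
    have hop : 0 ≤ opNorm C := norm_nonneg _
    calc |(inner ℝ a (Matrix.toEuclideanCLM (𝕜 := ℝ) C b) : ℝ)| ≤ ‖a‖ * (opNorm C * ‖b‖) := h1
      _ ≤ Real.sqrt ((d:ℝ) - 1) * (opNorm C * Real.sqrt ((d:ℝ) - 1)) := by
          apply mul_le_mul hna _ (by positivity) (Real.sqrt_nonneg _)
          exact mul_le_mul_of_nonneg_left hnb hop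
      _ = ((d:ℝ) - 1) * opNorm C := by rw [mul_comm (opNorm C), ← mul_assoc, hs]

/-- For orthogonal Hermitian operator bases on `ℂ^d`, a real
`(d²−1)×(d²−1)` matrix `C` and `S = ∑_{i,j≥1} c_{ij} G^A_i ⊗ G^B_j`, every
separable state `σ` satisfies `−(d−1)‖C‖ ≤ Tr(Sσ) ≤ (d−1)‖C‖`. -/
theorem stmt3 (d n : ℕ) (hn : n + 1 = d ^ 2)
    (GA GB : Fin (n + 1) → Matrix (Fin d) (Fin d) ℂ)
    (hGA : ∀ k l, ((GA k)ᴴ * GA l).trace = if k = l then (d : ℂ) else 0)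
    (hGB : ∀ k l, ((GB k)ᴴ * GB l).trace = if k = l then (d : ℂ) else 0)
    (hGA0 : GA 0 = 1) (hGB0 : GB 0 = 1)
    (hGAtr : ∀ i : Fin n, (GA i.succ).trace = 0)
    (hGBtr : ∀ i : Fin n, (GB i.succ).trace = 0)
    (hGAherm : ∀ i : Fin n, (GA i.succ).IsHermitian)
    (hGBherm : ∀ i : Fin n, (GB i.succ).IsHermitian)
    (C : Matrix (Fin n) (Fin n) ℝ)
    (S : Matrix (Fin d × Fin d) (Fin d × Fin d) ℂ)
    (hS : S = ∑ i : Fin n, ∑ j : Fin n, (C i j : ℂ) • (GA i.succ ⊗ₖ GB j.succ))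
    (σ : Matrix (Fin d × Fin d) (Fin d × Fin d) ℂ) (hσ : IsSeparableState σ) :
    ∃ r : ℝ, (S * σ).trace = (r : ℂ) ∧
      -(((d : ℝ) - 1) * opNorm C) ≤ r ∧ r ≤ ((d : ℝ) - 1) * opNorm C := by
  obtain ⟨m, p, ρA, ρB, hp0, hp1, hρA, hρB, hσeq⟩ := hσ
  have hd : 0 < d := Nat.pos_of_ne_zero (fun h => by simp [h] at hn)
  choose r hr hrb using fun k =>
    term_bound hd GA GB hGA hGB hGA0 hGB0 hGAherm hGBherm C (ρA k) (ρB k) (hρA k) (hρB k)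
  have hd1 : (1:ℝ) ≤ (d:ℝ) := by exact_mod_cast hd
  have hop : (0:ℝ) ≤ opNorm C := norm_nonneg _
  have hM : (0:ℝ) ≤ ((d:ℝ) - 1) * opNorm C := mul_nonneg (by linarith) hop
  refine ⟨∑ k, p k * r k, ?_, ?_, ?_⟩
  · rw [hσeq, Finset.mul_sum, Matrix.trace_sum]
    push_cast
    refine Finset.sum_congr rfl fun k _ => ?_
    rw [Matrix.mul_smul, Matrix.trace_smul, hS, hr k, smul_eq_mul]
  · have h2 : ∑ k, p k * (-(((d:ℝ) - 1) * opNorm C)) ≤ ∑ k, p k * r k :=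
      Finset.sum_le_sum fun k _ =>
        mul_le_mul_of_nonneg_left (neg_le_of_abs_le (hrb k)) (hp0 k)
    rw [← Finset.sum_mul, hp1, one_mul] at h2
    exact h2
  · have h1 : ∑ k, p k * r k ≤ ∑ k, p k * (((d:ℝ) - 1) * opNorm C) :=
      Finset.sum_le_sum fun k _ =>
        mul_le_mul_of_nonneg_left (le_of_abs_le (hrb k)) (hp0 k)
    rw [← Finset.sum_mul, hp1, one_mul] at h1
    exact h1
end

section
/- Let {G^A_i} and {G^B_j} be orthogonal operator bases on ℂ^d (Tr(G† G') = d·δ, G_0 = I, G_i Hermitian traceless for i ≥ 1), C = [c_{ij}] a real (d²−1)×(d²−1) matrix, and S = ∑_{i,j=1}^{d^2-1} c_{ij} G^A_i ⊗ G^B_j. Define W₊ = (d−1)‖C‖·I + S and W₋ = (d−1)‖C‖·I − S, where I is the identity on ℂ^d ⊗ ℂ^d and ‖C‖ is the operator norm of C. Then Tr(W₊ σ) ≥ 0 and Tr(W₋ σ) ≥ 0 for every separable state σ on ℂ^d ⊗ ℂ^d. -/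
open Matrix
open Kronecker
open scoped BigOperators ComplexOrder

lemma trace_herm_mul_real {d : ℕ} {G ρ : Matrix (Fin d) (Fin d) ℂ}
    (hG : G.IsHermitian) (hρ : ρ.IsHermitian) :
    ((G * ρ).trace.re : ℂ) = (G * ρ).trace := by
  rw [← Complex.conj_eq_iff_re]
  calc (starRingEnd ℂ) (G * ρ).trace = ((G * ρ)ᴴ).trace := (Matrix.trace_conjTranspose _).symm
    _ = (ρ * G).trace := by rw [Matrix.conjTranspose_mul, hG.eq, hρ.eq]
    _ = (G * ρ).trace := Matrix.trace_mul_comm _ _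

lemma trace_sq_le {d : ℕ} {ρ : Matrix (Fin d) (Fin d) ℂ}
    (hρ : ρ.PosSemidef) (ht : ρ.trace = 1) : (ρ * ρ).trace.re ≤ 1 := by
  have hH := hρ.1
  set V : Matrix (Fin d) (Fin d) ℂ := (hH.eigenvectorUnitary : Matrix (Fin d) (Fin d) ℂ) with hV
  have h2 : star V * V = 1 := Matrix.mem_unitaryGroup_iff'.mp hH.eigenvectorUnitary.2
  set D : Matrix (Fin d) (Fin d) ℂ := Matrix.diagonal (RCLike.ofReal ∘ hH.eigenvalues) with hD
  have hspec : ρ = V * D * star V := hH.spectral_theorem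
  have key : ∀ M : Matrix (Fin d) (Fin d) ℂ, (V * M * star V).trace = M.trace := by
    intro M
    rw [Matrix.trace_mul_comm, ← Matrix.mul_assoc, h2, Matrix.one_mul]
  have htr2 : (ρ * ρ).trace = (D * D).trace := by
    have : ρ * ρ = V * (D * D) * star V := by
      rw [hspec]
      calc V * D * star V * (V * D * star V) = V * (D * (star V * V) * D) * star V := by
            noncomm_ring
        _ = V * (D * D) * star V := by rw [h2]; noncomm_ring
    rw [this, key]
  have hDD : (D * D).trace = ∑ i, ((hH.eigenvalues i : ℂ) * (hH.eigenvalues i : ℂ)) := by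
    rw [hD, Matrix.diagonal_mul_diagonal, Matrix.trace_diagonal]
    simp
  have hev : ∑ i, hH.eigenvalues i = 1 := by
    have h3 : ρ.trace = ∑ i, (hH.eigenvalues i : ℂ) := by
      conv_lhs => rw [hspec]
      rw [key, hD, Matrix.trace_diagonal]
      simp
    rw [ht] at h3
    exact_mod_cast h3.symm
  have hnn : ∀ i, 0 ≤ hH.eigenvalues i := hρ.eigenvalues_nonneg
  have hle1 : ∀ i, hH.eigenvalues i ≤ 1 := by
    intro i
    rw [← hev]
    exact Finset.single_le_sum (fun j _ => hnn j) (Finset.mem_univ i)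
  rw [htr2, hDD]
  have : (∑ i, ((hH.eigenvalues i : ℂ) * (hH.eigenvalues i : ℂ))) =
      ((∑ i, hH.eigenvalues i * hH.eigenvalues i : ℝ) : ℂ) := by push_cast; ring
  rw [this, Complex.ofReal_re]
  calc ∑ i, hH.eigenvalues i * hH.eigenvalues i
      ≤ ∑ i, hH.eigenvalues i := Finset.sum_le_sum fun i _ =>
        mul_le_of_le_one_right (hnn i) (hle1 i)
    _ = 1 := hev

lemma trace_conjTranspose_mul {d : ℕ} (A B : Matrix (Fin d) (Fin d) ℂ) :
    (Aᴴ * B).trace = ∑ p : Fin d × Fin d, (starRingEnd ℂ) (A p.1 p.2) * B p.1 p.2 := by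
  rw [Fintype.sum_prod_type]
  rw [Matrix.trace, Finset.sum_comm]
  simp [Matrix.diag, Matrix.mul_apply, Matrix.conjTranspose_apply]

lemma bloch_bound {d n : ℕ} (hd : 0 < d)
    (G : Fin (n + 1) → Matrix (Fin d) (Fin d) ℂ)
    (hG : ∀ k l, ((G k)ᴴ * G l).trace = if k = l then (d : ℂ) else 0)
    (hG0 : G 0 = 1)
    (hGh : ∀ i : Fin n, (G i.succ).IsHermitian)
    {ρ : Matrix (Fin d) (Fin d) ℂ} (hρ : IsDensityMatrix ρ) :
    ∑ i : Fin n, ((G i.succ * ρ).trace.re) ^ 2 ≤ (d : ℝ) - 1 := by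
  obtain ⟨hherm, hpsd, htr⟩ := hρ
  have hd0 : (0:ℝ) < (d:ℝ) := by exact_mod_cast hd
  have hsd : Real.sqrt d ≠ 0 := by positivity
  have hsdC : ((Real.sqrt d : ℝ) : ℂ) ≠ 0 := by exact_mod_cast hsd
  set v : Fin (n + 1) → EuclideanSpace ℂ (Fin d × Fin d) :=
    fun k => (WithLp.equiv 2 ((Fin d × Fin d) → ℂ)).symm
      (fun p => G k p.1 p.2 / (Real.sqrt d : ℂ)) with hv
  set x : EuclideanSpace ℂ (Fin d × Fin d) :=
    (WithLp.equiv 2 ((Fin d × Fin d) → ℂ)).symm (fun p => ρ p.1 p.2) with hx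
  have hinner : ∀ k, (inner ℂ (v k) x : ℂ) = ((G k)ᴴ * ρ).trace / (Real.sqrt d : ℂ) := by
    intro k
    rw [PiLp.inner_apply, trace_conjTranspose_mul]
    rw [Finset.sum_div]
    apply Finset.sum_congr rfl
    intro p _
    simp only [hv, hx, WithLp.equiv_symm_apply, PiLp.toLp_apply, RCLike.inner_apply']
    rw [map_div₀]
    have : (starRingEnd ℂ) ((Real.sqrt d : ℝ) : ℂ) = ((Real.sqrt d : ℝ) : ℂ) :=
      Complex.conj_ofReal _
    rw [this]
    field_simp
  have hortho : Orthonormal ℂ v := by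
    rw [orthonormal_iff_ite]
    intro k l
    rw [PiLp.inner_apply]
    have : ∀ p : Fin d × Fin d, (inner ℂ (v k p) (v l p) : ℂ) =
        (starRingEnd ℂ) (G k p.1 p.2) * G l p.1 p.2 / ((d : ℂ)) := by
      intro p
      simp only [hv, WithLp.equiv_symm_apply, PiLp.toLp_apply, RCLike.inner_apply']
      rw [map_div₀, Complex.conj_ofReal]
      rw [div_mul_div_comm]
      congr 1
      rw [← Complex.ofReal_mul, Real.mul_self_sqrt hd0.le]
      norm_cast
    rw [Finset.sum_congr rfl fun p _ => this p, ← Finset.sum_div,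
      ← trace_conjTranspose_mul, hG k l]
    have hdC : (d : ℂ) ≠ 0 := by exact_mod_cast hd.ne'
    split <;> simp_all
  have hbessel := hortho.sum_inner_products_le (s := Finset.univ) x
  have hnx : ‖x‖ ^ 2 ≤ 1 := by
    have h1 : (inner ℂ x x : ℂ) = (ρᴴ * ρ).trace := by
      rw [PiLp.inner_apply, trace_conjTranspose_mul]
      apply Finset.sum_congr rfl
      intro p _
      simp only [hx, WithLp.equiv_symm_apply, PiLp.toLp_apply, RCLike.inner_apply']
    have h2 : RCLike.re (inner ℂ x x : ℂ) = ‖x‖ ^ 2 := inner_self_eq_norm_sq x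
    rw [← h2, h1, hherm.eq]
    exact trace_sq_le hpsd htr
  rw [Fin.sum_univ_succ] at hbessel
  have h00 : ‖(inner ℂ (v 0) x : ℂ)‖ ^ 2 = 1 / d := by
    rw [hinner 0, hG0]
    simp only [Matrix.conjTranspose_one, Matrix.one_mul, htr]
    rw [norm_div]
    simp [Real.sq_sqrt hd0.le]
  have hsucc : ∀ i : Fin n, ‖(inner ℂ (v i.succ) x : ℂ)‖ ^ 2 =
      ((G i.succ * ρ).trace.re) ^ 2 / d := by
    intro i
    rw [hinner i.succ, (hGh i).eq]
    rw [norm_div]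
    have : ‖(G i.succ * ρ).trace‖ = |(G i.succ * ρ).trace.re| := by
      have hr : ((G i.succ * ρ).trace.re : ℂ) = (G i.succ * ρ).trace :=
        trace_herm_mul_real (hGh i) hherm
      rw [← hr]; simp
    rw [this, div_pow, sq_abs]
    congr 1
    simp [Real.sq_sqrt hd0.le]
  rw [h00, Finset.sum_congr rfl fun i _ => hsucc i] at hbessel
  have hb2 : 1 / (d:ℝ) + (∑ i : Fin n, ((G i.succ * ρ).trace.re) ^ 2) / d ≤ 1 := by
    rw [Finset.sum_div]
    exact hbessel.trans hnx
  have := mul_le_mul_of_nonneg_left hb2 hd0.le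
  rw [mul_add, mul_one] at this
  rw [mul_div_cancel₀ _ hd0.ne', mul_div_cancel₀ _ hd0.ne'] at this
  linarith

lemma bilinear_bound {n : ℕ} (C : Matrix (Fin n) (Fin n) ℝ) (a b : EuclideanSpace ℝ (Fin n)) :
    |∑ i, ∑ j, C i j * a i * b j| ≤ opNorm C * ‖a‖ * ‖b‖ := by
  set T := (Matrix.toEuclideanCLM (𝕜 := ℝ) C :
      EuclideanSpace ℝ (Fin n) →L[ℝ] EuclideanSpace ℝ (Fin n))
  have h1 : (inner ℝ a (T b) : ℝ) = ∑ i, ∑ j, C i j * a i * b j := by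
    rw [PiLp.inner_apply]
    apply Finset.sum_congr rfl
    intro i _
    have hTb : T b i = ∑ j, C i j * b j := by
      have := Matrix.ofLp_toEuclideanCLM (𝕜 := ℝ) C b
      have h2 : T b i = (Matrix.toLin' C (WithLp.equiv _ _ b)) i := by
        exact congrFun this i
      rw [h2, Matrix.toLin'_apply, Matrix.mulVec, dotProduct]
      rfl
    rw [hTb, RCLike.inner_apply', starRingEnd_apply, star_trivial, Finset.mul_sum]
    apply Finset.sum_congr rfl
    intro j _
    ring
  rw [← h1]
  calc |(inner ℝ a (T b) : ℝ)| ≤ ‖a‖ * ‖T b‖ := abs_real_inner_le_norm a (T b)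
    _ ≤ ‖a‖ * (opNorm C * ‖b‖) := by
        apply mul_le_mul_of_nonneg_left (T.le_opNorm b) (norm_nonneg a)
    _ = opNorm C * ‖a‖ * ‖b‖ := by ring

/-- With `S = ∑_{i,j≥1} c_{ij} G^A_i ⊗ G^B_j` as above and
`W₊ = (d−1)‖C‖·I + S`, `W₋ = (d−1)‖C‖·I − S`, both witnesses have nonnegative
expectation value `Tr(W σ) ≥ 0` on every separable state `σ`. -/
theorem stmt4 (d n : ℕ) (hn : n + 1 = d ^ 2)
    (GA GB : Fin (n + 1) → Matrix (Fin d) (Fin d) ℂ)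
    (hGA : ∀ k l, ((GA k)ᴴ * GA l).trace = if k = l then (d : ℂ) else 0)
    (hGB : ∀ k l, ((GB k)ᴴ * GB l).trace = if k = l then (d : ℂ) else 0)
    (hGA0 : GA 0 = 1) (hGB0 : GB 0 = 1)
    (hGAtr : ∀ i : Fin n, (GA i.succ).trace = 0)
    (hGBtr : ∀ i : Fin n, (GB i.succ).trace = 0)
    (hGAherm : ∀ i : Fin n, (GA i.succ).IsHermitian)
    (hGBherm : ∀ i : Fin n, (GB i.succ).IsHermitian)
    (C : Matrix (Fin n) (Fin n) ℝ)
    (S : Matrix (Fin d × Fin d) (Fin d × Fin d) ℂ)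
    (hS : S = ∑ i : Fin n, ∑ j : Fin n, (C i j : ℂ) • (GA i.succ ⊗ₖ GB j.succ))
    (Wplus Wminus : Matrix (Fin d × Fin d) (Fin d × Fin d) ℂ)
    (hWplus : Wplus = (((d : ℝ) - 1) * opNorm C : ℝ) • (1 : Matrix (Fin d × Fin d) (Fin d × Fin d) ℂ) + S)
    (hWminus : Wminus = (((d : ℝ) - 1) * opNorm C : ℝ) • (1 : Matrix (Fin d × Fin d) (Fin d × Fin d) ℂ) - S)
    (σ : Matrix (Fin d × Fin d) (Fin d × Fin d) ℂ) (hσ : IsSeparableState σ) :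
    (∃ r : ℝ, (Wplus * σ).trace = (r : ℂ) ∧ 0 ≤ r) ∧
    (∃ r : ℝ, (Wminus * σ).trace = (r : ℂ) ∧ 0 ≤ r) := by
  obtain ⟨m, p, ρA, ρB, hp, hps, hρA, hρB, hσeq⟩ := hσ
  have hd : 0 < d := by
    rcases Nat.eq_zero_or_pos d with h | h
    · subst h; simp at hn
    · exact h
  have hd1 : (1:ℝ) ≤ (d:ℝ) := by exact_mod_cast hd
  -- Bloch vectors
  set a : Fin m → EuclideanSpace ℝ (Fin n) :=
    fun k => (WithLp.equiv 2 (Fin n → ℝ)).symm (fun i => ((GA i.succ * ρA k).trace).re) with ha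
  set b : Fin m → EuclideanSpace ℝ (Fin n) :=
    fun k => (WithLp.equiv 2 (Fin n → ℝ)).symm (fun j => ((GB j.succ * ρB k).trace).re) with hb
  set t : Fin m → ℝ := fun k => ∑ i, ∑ j, C i j * a k i * b k j with htdef
  -- norms of Bloch vectors
  have hna : ∀ k, ‖a k‖ ≤ Real.sqrt ((d:ℝ) - 1) := by
    intro k
    rw [EuclideanSpace.norm_eq]
    apply Real.sqrt_le_sqrt
    calc ∑ i, ‖a k i‖ ^ 2 = ∑ i : Fin n, ((GA i.succ * ρA k).trace.re) ^ 2 := by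
          apply Finset.sum_congr rfl; intro i _
          simp [ha, WithLp.equiv_symm_apply, PiLp.toLp_apply, sq_abs]
      _ ≤ (d:ℝ) - 1 := bloch_bound hd GA hGA hGA0 hGAherm (hρA k)
  have hnb : ∀ k, ‖b k‖ ≤ Real.sqrt ((d:ℝ) - 1) := by
    intro k
    rw [EuclideanSpace.norm_eq]
    apply Real.sqrt_le_sqrt
    calc ∑ j, ‖b k j‖ ^ 2 = ∑ j : Fin n, ((GB j.succ * ρB k).trace.re) ^ 2 := by
          apply Finset.sum_congr rfl; intro j _
          simp [hb, WithLp.equiv_symm_apply, PiLp.toLp_apply, sq_abs]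
      _ ≤ (d:ℝ) - 1 := bloch_bound hd GB hGB hGB0 hGBherm (hρB k)
  have hopC : 0 ≤ opNorm C := norm_nonneg _
  have ht : ∀ k, |t k| ≤ ((d:ℝ) - 1) * opNorm C := by
    intro k
    calc |t k| ≤ opNorm C * ‖a k‖ * ‖b k‖ := bilinear_bound C (a k) (b k)
      _ ≤ opNorm C * Real.sqrt ((d:ℝ) - 1) * Real.sqrt ((d:ℝ) - 1) := by
          apply mul_le_mul
          · exact mul_le_mul_of_nonneg_left (hna k) hopC
          · exact hnb k
          · exact norm_nonneg _
          · positivity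
      _ = ((d:ℝ) - 1) * opNorm C := by
          rw [mul_assoc, Real.mul_self_sqrt (by linarith)]
          ring
  -- trace of σ
  have htrσ : σ.trace = 1 := by
    rw [hσeq, Matrix.trace_sum]
    have : ∀ k, ((p k : ℂ) • (ρA k ⊗ₖ ρB k)).trace = (p k : ℂ) := by
      intro k
      rw [Matrix.trace_smul, Matrix.trace_kronecker, (hρA k).2.2, (hρB k).2.2]
      simp
    rw [Finset.sum_congr rfl fun k _ => this k]
    exact_mod_cast hps
  -- trace of S * σ
  have hSσ : (S * σ).trace = ((∑ k, p k * t k : ℝ) : ℂ) := by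
    rw [hσeq, Finset.mul_sum, Matrix.trace_sum]
    have hterm : ∀ k, (S * ((p k : ℂ) • (ρA k ⊗ₖ ρB k))).trace = ((p k * t k : ℝ) : ℂ) := by
      intro k
      rw [Matrix.mul_smul, Matrix.trace_smul]
      have hSk : (S * (ρA k ⊗ₖ ρB k)).trace = ((t k : ℝ) : ℂ) := by
        rw [hS, Matrix.sum_mul, Matrix.trace_sum]
        have hij : ∀ i : Fin n,
            ((∑ j : Fin n, (C i j : ℂ) • (GA i.succ ⊗ₖ GB j.succ)) * (ρA k ⊗ₖ ρB k)).trace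
            = ((∑ j, C i j * a k i * b k j : ℝ) : ℂ) := by
          intro i
          rw [Matrix.sum_mul, Matrix.trace_sum]
          push_cast
          apply Finset.sum_congr rfl
          intro j _
          rw [Matrix.smul_mul, Matrix.trace_smul, ← Matrix.mul_kronecker_mul,
            Matrix.trace_kronecker]
          rw [← trace_herm_mul_real (hGAherm i) (hρA k).1,
            ← trace_herm_mul_real (hGBherm j) (hρB k).1]
          simp only [smul_eq_mul, ha, hb, WithLp.equiv_symm_apply, PiLp.toLp_apply]
          ring
        rw [Finset.sum_congr rfl fun i _ => hij i, htdef]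
        push_cast
        rfl
      rw [hSk, smul_eq_mul]
      push_cast
      ring
    rw [Finset.sum_congr rfl fun k _ => hterm k]
    push_cast
    rfl
  -- sum bound
  have hsum : |∑ k, p k * t k| ≤ ((d:ℝ) - 1) * opNorm C := by
    calc |∑ k, p k * t k| ≤ ∑ k, |p k * t k| := Finset.abs_sum_le_sum_abs _ _
      _ ≤ ∑ k, p k * (((d:ℝ) - 1) * opNorm C) := by
          apply Finset.sum_le_sum
          intro k _
          rw [abs_mul, abs_of_nonneg (hp k)]
          exact mul_le_mul_of_nonneg_left (ht k) (hp k)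
      _ = ((d:ℝ) - 1) * opNorm C := by rw [← Finset.sum_mul, hps, one_mul]
  constructor
  · refine ⟨((d:ℝ) - 1) * opNorm C + ∑ k, p k * t k, ?_, ?_⟩
    · rw [hWplus, Matrix.add_mul, Matrix.trace_add, Matrix.smul_mul, Matrix.one_mul,
        Matrix.trace_smul, htrσ, hSσ, Complex.real_smul]
      push_cast
      ring
    · have := abs_le.mp hsum
      linarith
  · refine ⟨((d:ℝ) - 1) * opNorm C - ∑ k, p k * t k, ?_, ?_⟩
    · rw [hWminus, Matrix.sub_mul, Matrix.trace_sub, Matrix.smul_mul, Matrix.one_mul,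
        Matrix.trace_smul, htrσ, hSσ, Complex.real_smul]
      push_cast
      ring
    · have := abs_le.mp hsum
      linarith
end

section
/- For real numbers α, β, γ, let C be the real 3×3 matrix with C₁₁ = α, C₁₃ = β, C₃₁ = γ, and all other entries zero (the coefficient matrix of the L-shaped observable S = α·X⊗X + β·X⊗Z + γ·Z⊗X). Then the operator norm of C satisfies ‖C‖² = (T + √(T² − 4β²γ²))/2, where T = α² + β² + γ². -/
open Matrix
open scoped BigOperators

private lemma quad_aux (A B c x y : ℝ) (hA : 0 ≤ A) (hB : 0 ≤ B) (h : A * B = c ^ 2) :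
    2 * c * x * y ≤ A * x ^ 2 + B * y ^ 2 := by
  rcases eq_or_lt_of_le hA with hA0 | hApos
  · have hc : c = 0 := by
      have : c ^ 2 = 0 := by rw [← h, ← hA0]; ring
      exact pow_eq_zero_iff (n := 2) (by norm_num) |>.mp this
    subst hc
    nlinarith [mul_nonneg hB (sq_nonneg y), sq_nonneg x]
  · nlinarith [sq_nonneg (A * x - c * y), mul_pos hApos hApos]

private lemma norm_sq_eucl (x : EuclideanSpace ℝ (Fin 3)) :
    ‖x‖ ^ 2 = (x 0) ^ 2 + (x 1) ^ 2 + (x 2) ^ 2 := by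
  rw [EuclideanSpace.norm_eq, Real.sq_sqrt (by positivity)]
  simp [Fin.sum_univ_three, sq_abs]

private lemma apply_norm_sq (α β γ : ℝ) (x : EuclideanSpace ℝ (Fin 3)) :
    ‖(Matrix.toEuclideanCLM (𝕜 := ℝ) !![α, 0, β; 0, 0, 0; γ, 0, 0] x)‖ ^ 2
      = (α * x 0 + β * x 2) ^ 2 + (γ * x 0) ^ 2 := by
  rw [EuclideanSpace.norm_eq, Real.sq_sqrt (by positivity)]
  have h : ∀ i, (Matrix.toEuclideanCLM (𝕜 := ℝ) !![α, 0, β; 0, 0, 0; γ, 0, 0] x) i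
      = (!![α, 0, β; 0, 0, 0; γ, 0, 0]).mulVec (fun j => x j) i := fun i => rfl
  simp [h, Matrix.mulVec, dotProduct, Fin.sum_univ_three, sq_abs, Matrix.vecHead, Matrix.vecTail]

/-- For the L-shaped coefficient matrix `C` with `C₁₁ = α`,
`C₁₃ = β`, `C₃₁ = γ` and all other entries zero, the operator norm satisfies
`‖C‖² = (T + √(T² − 4β²γ²))/2`, where `T = α² + β² + γ²`. -/
theorem stmt11 (α β γ : ℝ) :
    (opNorm !![α, 0, β; 0, 0, 0; γ, 0, 0]) ^ 2
      = ((α ^ 2 + β ^ 2 + γ ^ 2)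
          + Real.sqrt ((α ^ 2 + β ^ 2 + γ ^ 2) ^ 2 - 4 * β ^ 2 * γ ^ 2)) / 2 := by
  have hDnn : (0:ℝ) ≤ (α ^ 2 + β ^ 2 + γ ^ 2) ^ 2 - 4 * β ^ 2 * γ ^ 2 := by
    nlinarith [sq_nonneg (β ^ 2 - γ ^ 2), sq_nonneg α, sq_nonneg (α ^ 2), sq_nonneg (α * β),
      sq_nonneg (α * γ), sq_nonneg β, sq_nonneg γ]
  set s : ℝ := Real.sqrt ((α ^ 2 + β ^ 2 + γ ^ 2) ^ 2 - 4 * β ^ 2 * γ ^ 2) with hs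
  have hs0 : 0 ≤ s := Real.sqrt_nonneg _
  have hs2 : s ^ 2 = (α ^ 2 + β ^ 2 + γ ^ 2) ^ 2 - 4 * β ^ 2 * γ ^ 2 := Real.sq_sqrt hDnn
  set lam : ℝ := ((α ^ 2 + β ^ 2 + γ ^ 2) + s) / 2 with hlam
  have hlam2 : lam ^ 2 = (α ^ 2 + β ^ 2 + γ ^ 2) * lam - β ^ 2 * γ ^ 2 := by
    rw [hlam]; linear_combination hs2 / 4
  have h1 : α ^ 2 + γ ^ 2 ≤ lam := by
    rw [hlam]
    nlinarith [hs2, hs0, sq_nonneg (α * β), sq_nonneg (s + (α ^ 2 + γ ^ 2 - β ^ 2))]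
  have h2 : β ^ 2 ≤ lam := by
    rw [hlam]
    nlinarith [hs2, hs0, sq_nonneg (α * β), sq_nonneg (s + (β ^ 2 - α ^ 2 - γ ^ 2))]
  have hlam0 : 0 ≤ lam := le_trans (by positivity) h2
  have hkey : (lam - (α ^ 2 + γ ^ 2)) * (lam - β ^ 2) = (α * β) ^ 2 := by
    linear_combination hlam2
  set C : Matrix (Fin 3) (Fin 3) ℝ := !![α, 0, β; 0, 0, 0; γ, 0, 0] with hC
  set Φ : EuclideanSpace ℝ (Fin 3) →L[ℝ] EuclideanSpace ℝ (Fin 3) :=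
    Matrix.toEuclideanCLM (𝕜 := ℝ) C with hΦ
  -- upper bound
  have hub : ‖Φ‖ ≤ Real.sqrt lam := by
    apply ContinuousLinearMap.opNorm_le_bound _ (Real.sqrt_nonneg _)
    intro x
    have hb : ‖Φ x‖ ^ 2 ≤ lam * ‖x‖ ^ 2 := by
      rw [hΦ, hC, apply_norm_sq, norm_sq_eucl x]
      have hq := quad_aux (lam - (α ^ 2 + γ ^ 2)) (lam - β ^ 2) (α * β) (x 0) (x 2)
        (by linarith) (by linarith) hkey
      nlinarith [mul_nonneg hlam0 (sq_nonneg (x 1))]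
    have := Real.sqrt_le_sqrt hb
    rwa [Real.sqrt_sq (norm_nonneg _), Real.sqrt_mul hlam0, Real.sqrt_sq (norm_nonneg _)] at this
  -- lower bound
  have hlb : Real.sqrt lam ≤ ‖Φ‖ := by
    obtain ⟨v, hv0, hvnorm⟩ : ∃ v : EuclideanSpace ℝ (Fin 3),
        v ≠ 0 ∧ ‖Φ v‖ ^ 2 = lam * ‖v‖ ^ 2 := by
      by_cases hz : lam - β ^ 2 = 0 ∧ α * β = 0
      · refine ⟨(WithLp.equiv 2 (Fin 3 → ℝ)).symm ![0, 0, 1], ?_, ?_⟩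
        · intro h
          have := congrFun (congrArg (WithLp.equiv 2 (Fin 3 → ℝ)) h) 2
          simp at this
        · rw [hΦ, hC, apply_norm_sq, norm_sq_eucl]
          have e0 : ((WithLp.equiv 2 (Fin 3 → ℝ)).symm ![(0:ℝ), 0, 1]) 0 = 0 := rfl
          have e1 : ((WithLp.equiv 2 (Fin 3 → ℝ)).symm ![(0:ℝ), 0, 1]) 1 = 0 := rfl
          have e2 : ((WithLp.equiv 2 (Fin 3 → ℝ)).symm ![(0:ℝ), 0, 1]) 2 = 1 := rfl
          rw [e0, e1, e2]
          have hl : lam = β ^ 2 := by linarith [hz.1]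
          rw [hl]; ring
      · refine ⟨(WithLp.equiv 2 (Fin 3 → ℝ)).symm ![lam - β ^ 2, 0, α * β], ?_, ?_⟩
        · intro h
          apply hz
          have h0 := congrFun (congrArg (WithLp.equiv 2 (Fin 3 → ℝ)) h) 0
          have h2' := congrFun (congrArg (WithLp.equiv 2 (Fin 3 → ℝ)) h) 2
          exact ⟨h0, h2'⟩
        · rw [hΦ, hC, apply_norm_sq, norm_sq_eucl]
          have e0 : ((WithLp.equiv 2 (Fin 3 → ℝ)).symm ![lam - β ^ 2, 0, α * β]) 0
              = lam - β ^ 2 := rfl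
          have e1 : ((WithLp.equiv 2 (Fin 3 → ℝ)).symm ![lam - β ^ 2, 0, α * β]) 1 = 0 := rfl
          have e2 : ((WithLp.equiv 2 (Fin 3 → ℝ)).symm ![lam - β ^ 2, 0, α * β]) 2
              = α * β := rfl
          rw [e0, e1, e2]
          linear_combination (β ^ 2 - lam) * hlam2
    have hv : 0 < ‖v‖ := norm_pos_iff.mpr hv0
    have hΦv : ‖Φ v‖ = Real.sqrt lam * ‖v‖ := by
      have : ‖Φ v‖ = Real.sqrt (lam * ‖v‖ ^ 2) := by
        rw [← hvnorm, Real.sqrt_sq (norm_nonneg _)]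
      rw [this, Real.sqrt_mul hlam0, Real.sqrt_sq (norm_nonneg _)]
    have hle := Φ.le_opNorm v
    rw [hΦv] at hle
    exact le_of_mul_le_mul_right hle hv
  have heq : ‖Φ‖ = Real.sqrt lam := le_antisymm hub hlb
  calc (opNorm C) ^ 2 = ‖Φ‖ ^ 2 := rfl
    _ = lam := by rw [heq, Real.sq_sqrt hlam0]
end
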